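/- If two signals s₁, s₂ of the same order agree on [0, l(φ)] (i.e., s₁(t) = s₂(t) for all t ≤ l(φ), both having length at least l(φ)), then s₁ ⊨ φ iff s₂ ⊨ φ. -/
import Mathlib


/-- Syntax of STL* formulae over signals of order `n`.  An atomic predicate is
given by a predicate on the tuple of signal values at the current time and at
the frozen time. -/
inductive STL (n : ℕ) where
  | atom : ((Fin n → ℝ) → (Fin n → ℝ) → Prop) → STL n
  | neg : STL n → STL n
  | disj : STL n → STL n → STL n
  | untl : ℝ → ℝ → STL n → STL n → STL n
  | freeze : STL n → STL n

/-- STL* satisfaction relation `(s, t, t*) ⊨ φ`. -/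
def sat {n : ℕ} (s : ℝ → Fin n → ℝ) : STL n → ℝ → ℝ → Prop
  | .atom μ, t, ts => μ (s t) (s ts)
  | .neg φ, t, ts => ¬ sat s φ t ts
  | .disj φ ψ, t, ts => sat s φ t ts ∨ sat s ψ t ts
  | .untl a b φ ψ, t, ts => ∃ t' ∈ Set.Icc (t + a) (t + b),
      sat s ψ t' ts ∧ ∀ t'' ∈ Set.Icc t t', sat s φ t'' ts
  | .freeze φ, t, ts => sat s φ t t

/-- The formula `true`. -/
def STL.tt {n : ℕ} : STL n := .atom (fun _ _ => True)

/-- Eventually `F[a,b] φ := true U[a,b] φ`. -/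
def STL.ev {n : ℕ} (a b : ℝ) (φ : STL n) : STL n := .untl a b .tt φ

/-- Globally `G[a,b] φ := ¬ F[a,b] ¬ φ`. -/
def STL.glob {n : ℕ} (a b : ℝ) (φ : STL n) : STL n := .neg (.untl a b .tt (.neg φ))

/-- Well-formedness: every until operator has bounds `0 ≤ a ≤ b`. -/
def wf {n : ℕ} : STL n → Prop
  | .atom _ => True
  | .neg φ => wf φ
  | .disj φ ψ => wf φ ∧ wf ψ
  | .untl a b φ ψ => 0 ≤ a ∧ a ≤ b ∧ wf φ ∧ wf ψ
  | .freeze φ => wf φ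

/-- The sufficient signal length `l(φ)`. -/
def len {n : ℕ} : STL n → ℝ
  | .atom _ => 0
  | .neg φ => len φ
  | .disj φ ψ => max (len φ) (len ψ)
  | .untl _ b φ ψ => max (len φ) (len ψ) + b
  | .freeze φ => len φ

lemma len_nonneg {n : ℕ} (φ : STL n) (hwf : wf φ) : 0 ≤ len φ := by
  induction φ with
  | atom μ => simp [len]
  | neg φ ih => exact ih hwf
  | disj φ ψ ihφ ihψ => exact le_max_of_le_left (ihφ hwf.1)
  | untl a b φ ψ ihφ ihψ =>
      have hb : 0 ≤ b := hwf.1.trans hwf.2.1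
      have := ihφ hwf.2.2.1
      simp only [len]
      have : 0 ≤ max (len φ) (len ψ) := le_max_of_le_left this
      linarith
  | freeze φ ih => exact ih hwf

lemma sat_agree_aux {n : ℕ} (s₁ s₂ : ℝ → Fin n → ℝ) (φ : STL n) (hwf : wf φ) :
    ∀ t ts : ℝ, 0 ≤ ts → ts ≤ t →
      (∀ u : ℝ, 0 ≤ u → u ≤ t + len φ → s₁ u = s₂ u) →
      (sat s₁ φ t ts ↔ sat s₂ φ t ts) := by
  induction φ with
  | atom μ =>
      intro t ts h0 hts hag
      have ht : 0 ≤ t := h0.trans hts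
      simp only [sat, len] at *
      rw [hag t ht (by linarith), hag ts h0 (by linarith)]
  | neg φ ih =>
      intro t ts h0 hts hag
      simp only [sat]
      exact not_congr (ih hwf t ts h0 hts hag)
  | disj φ ψ ihφ ihψ =>
      intro t ts h0 hts hag
      simp only [sat]
      have h1 : len φ ≤ len (STL.disj φ ψ) := le_max_left _ _
      have h2 : len ψ ≤ len (STL.disj φ ψ) := le_max_right _ _
      exact or_congr
        (ihφ hwf.1 t ts h0 hts (fun u hu hu' => hag u hu (by linarith)))
        (ihψ hwf.2 t ts h0 hts (fun u hu hu' => hag u hu (by linarith)))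
  | untl a b φ ψ ihφ ihψ =>
      intro t ts h0 hts hag
      obtain ⟨ha, hab, hwφ, hwψ⟩ := hwf
      have hlφ : len φ ≤ max (len φ) (len ψ) := le_max_left _ _
      have hlψ : len ψ ≤ max (len φ) (len ψ) := le_max_right _ _
      have hlen : len (STL.untl a b φ ψ) = max (len φ) (len ψ) + b := rfl
      simp only [sat]
      apply exists_congr; intro t'
      apply and_congr_right; rintro ⟨h1, h2⟩
      have ht' : t ≤ t' := by linarith
      apply and_congr
      · exact ihψ hwψ t' ts h0 (hts.trans ht')
          (fun u hu hu' => hag u hu (by rw [hlen]; linarith))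
      · apply forall_congr'; intro t''
        apply forall_congr'; rintro ⟨h3, h4⟩
        exact ihφ hwφ t'' ts h0 (hts.trans h3)
          (fun u hu hu' => hag u hu (by rw [hlen]; linarith))
  | freeze φ ih =>
      intro t ts h0 hts hag
      simp only [sat]
      exact ih hwf t t (h0.trans hts) le_rfl hag

/-- if two signals of the same order agree on `[0, l(φ)]`, then
`s₁ ⊨ φ` iff `s₂ ⊨ φ` (where `s ⊨ φ` means `(s,0,0) ⊨ φ`). -/
theorem sat_eq_of_agree {n : ℕ} (s₁ s₂ : ℝ → Fin n → ℝ) (φ : STL n) (hwf : wf φ)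
    (hagree : ∀ t : ℝ, 0 ≤ t → t ≤ len φ → s₁ t = s₂ t) :
    sat s₁ φ 0 0 ↔ sat s₂ φ 0 0 :=
  sat_agree_aux s₁ s₂ φ hwf 0 0 le_rfl le_rfl
    (fun u hu hu' => hagree u hu (by simpa using hu'))
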